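/- For b > 0 and a, s ∈ ℝ, ∫_ℝ i·x·exp(is(x−a)) dμ_{(b,a)}(x) = (−s/(2b) + ia)·exp(−s²/(4b)), where dμ_{(b,a)}(x) = √(b/π)·exp(−b(x−a)²) dx. -/

import Mathlib

open MeasureTheory Complex Real

lemma aux_integrable_mul_cexp_quadratic {β : ℂ} (hβ : β.re < 0) (c d : ℂ) :
    Integrable fun x : ℝ ↦ (x : ℂ) * Complex.exp (β * x ^ 2 + c * x + d) := by
  have h2 : (β / 2).re < 0 := by
    have : (β / 2).re = β.re / 2 := by
      simp [Complex.div_re, Complex.normSq]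
    rw [this]; linarith
  set k : ℝ := -β.re / 2 with hk_def
  have hk : 0 < k := by simp [hk_def]; linarith
  have hs : 0 < Real.sqrt k := Real.sqrt_pos.mpr hk
  have hint : Integrable fun x : ℝ ↦ Complex.exp ((β / 2) * x ^ 2 + c * x + d) :=
    integrable_cexp_quadratic' h2 c d
  refine (hint.norm.const_mul ((2 * Real.sqrt k)⁻¹)).mono' ?_ ?_
  · apply Continuous.aestronglyMeasurable
    exact Complex.continuous_ofReal.mul (Complex.continuous_exp.comp (by continuity))
  · refine Filter.Eventually.of_forall fun x ↦ ?_
    have h1 : 2 * Real.sqrt k * |x| ≤ Real.exp (k * x ^ 2) := by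
      have he := Real.add_one_le_exp (k * x ^ 2)
      nlinarith [sq_nonneg (1 - Real.sqrt k * |x|), Real.sq_sqrt hk.le, _root_.sq_abs x]
    have hnorm : ‖(x : ℂ) * Complex.exp (β * x ^ 2 + c * x + d)‖ =
        |x| * Real.exp (-(k * x ^ 2)) * ‖Complex.exp ((β / 2) * x ^ 2 + c * x + d)‖ := by
      simp only [norm_mul, Complex.norm_real, Real.norm_eq_abs, Complex.norm_exp]
      rw [mul_assoc, ← Real.exp_add]
      congr 2
      simp [Complex.add_re, Complex.mul_re, Complex.div_re, Complex.normSq, hk_def,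
        ← Complex.ofReal_pow, Complex.ofReal_re, Complex.ofReal_im]
      ring
    rw [hnorm]
    have hb2 : |x| * Real.exp (-(k * x ^ 2)) ≤ (2 * Real.sqrt k)⁻¹ := by
      calc |x| * Real.exp (-(k * x ^ 2))
          ≤ (Real.exp (k * x ^ 2) / (2 * Real.sqrt k)) * Real.exp (-(k * x ^ 2)) := by
            gcongr
            rw [le_div_iff₀ (by positivity), mul_comm]
            exact h1
        _ = (2 * Real.sqrt k)⁻¹ := by
            rw [Real.exp_neg]
            field_simp
    calc |x| * Real.exp (-(k * x ^ 2)) * ‖Complex.exp ((β / 2) * x ^ 2 + c * x + d)‖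
        ≤ (2 * Real.sqrt k)⁻¹ * ‖Complex.exp ((β / 2) * x ^ 2 + c * x + d)‖ := by
          gcongr
      _ = (2 * Real.sqrt k)⁻¹ * ‖Complex.exp ((β / 2) * x ^ 2 + c * x + d)‖ := rfl

lemma aux_integral_mul_cexp_quadratic {β : ℂ} (hβ : β.re < 0) (c d : ℂ) :
    ∫ x : ℝ, (x : ℂ) * Complex.exp (β * x ^ 2 + c * x + d) =
      -(c / (2 * β)) * ∫ x : ℝ, Complex.exp (β * x ^ 2 + c * x + d) := by
  have hβ0 : β ≠ 0 := by contrapose! hβ; rw [hβ, Complex.zero_re]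
  have hxf := aux_integrable_mul_cexp_quadratic hβ c d
  have hf := integrable_cexp_quadratic' hβ c d
  have hderiv : ∀ x : ℝ, HasDerivAt (fun y : ℝ ↦ Complex.exp (β * y ^ 2 + c * y + d))
      ((2 * β * x + c) * Complex.exp (β * x ^ 2 + c * x + d)) x := by
    intro x
    have A : ∀ z : ℂ, HasDerivAt (fun y : ℂ ↦ Complex.exp (β * y ^ 2 + c * y + d))
        ((2 * β * z + c) * Complex.exp (β * z ^ 2 + c * z + d)) z := by
      intro z
      have h1 : HasDerivAt (fun y : ℂ ↦ β * y ^ 2 + c * y + d) (2 * β * z + c) z := by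
        have := (((hasDerivAt_pow 2 z).const_mul β).add
          ((hasDerivAt_id z).const_mul c)).add_const d
        refine this.congr_deriv ?_
        rw [show (2 - 1 : ℕ) = 1 from rfl]
        ring
      simpa [mul_comm] using h1.cexp
    exact (A x).comp_ofReal
  have hf' : Integrable fun x : ℝ ↦ (2 * β * x + c) * Complex.exp (β * x ^ 2 + c * x + d) := by
    have h1 := hxf.const_mul (2 * β)
    have h2 := hf.const_mul c
    have := h1.add h2
    refine this.congr (Filter.Eventually.of_forall fun x => ?_)
    simp only [Pi.add_apply]
    ring
  have key : ∫ x : ℝ, (2 * β * x + c) * Complex.exp (β * x ^ 2 + c * x + d) = 0 :=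
    integral_eq_zero_of_hasDerivAt_of_integrable hderiv hf' hf
  have expand : ∫ x : ℝ, (2 * β * x + c) * Complex.exp (β * x ^ 2 + c * x + d) =
      2 * β * (∫ x : ℝ, (x : ℂ) * Complex.exp (β * x ^ 2 + c * x + d)) +
        c * ∫ x : ℝ, Complex.exp (β * x ^ 2 + c * x + d) := by
    rw [← integral_const_mul, ← integral_const_mul, ← integral_add (hxf.const_mul _)
      (hf.const_mul _)]
    congr 1; ext x; ring
  rw [expand] at key
  generalize ∫ x : ℝ, (x : ℂ) * Complex.exp (β * x ^ 2 + c * x + d) = A at key ⊢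
  generalize ∫ x : ℝ, Complex.exp (β * x ^ 2 + c * x + d) = B at key ⊢
  field_simp
  linear_combination key

theorem stmt_13 (b a s : ℝ) (hb : 0 < b) :
    ∫ x : ℝ, Complex.I * (x : ℂ) * Complex.exp (Complex.I * (s : ℂ) * ((x : ℂ) - (a : ℂ))) *
        ((Real.sqrt (b / Real.pi) * Real.exp (-b * (x - a) ^ 2) : ℝ) : ℂ) =
      (-(s : ℂ) / (2 * (b : ℂ)) + Complex.I * (a : ℂ)) *
        Complex.exp (-(s : ℂ) ^ 2 / (4 * (b : ℂ))) := by
  have hb0 : (b : ℂ) ≠ 0 := by exact_mod_cast hb.ne'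
  have hbβ : (-(b : ℂ)).re < 0 := by simpa using hb
  set C : ℂ := ((Real.sqrt (b / Real.pi) : ℝ) : ℂ) with hC
  set P : ℂ := ((Real.pi : ℂ) / b) ^ ((1:ℂ)/2) with hP
  set E : ℂ := Complex.exp (-(s : ℂ) ^ 2 / (4 * (b : ℂ))) with hE
  have hCP : C * P = 1 := by
    rw [hC, hP, show ((Real.pi : ℂ) / b) = ((Real.pi / b : ℝ) : ℂ) by push_cast; ring,
      show ((1:ℂ)/2) = (((1/2 : ℝ) : ℂ)) by norm_num,
      ← Complex.ofReal_cpow (by positivity) (1/2), ← Complex.ofReal_mul,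
      ← Real.sqrt_eq_rpow, ← Real.sqrt_mul (by positivity),
      show (b/Real.pi) * (Real.pi/b) = 1 by field_simp]
    simp
  have hI0 : ∫ x : ℝ, Complex.exp (-(b:ℂ) * x ^ 2 + (Complex.I * s) * x + 0) = P * E := by
    rw [integral_cexp_quadratic hbβ]
    rw [hP, hE]
    congr 2
    · ring
    · field_simp
      linear_combination ((s:ℂ)^2) * Complex.I_sq
  have hI1 : ∫ x : ℝ, (x:ℂ) * Complex.exp (-(b:ℂ) * x ^ 2 + (Complex.I * s) * x + 0) =
      -(Complex.I * s / (2 * -(b:ℂ))) * (P * E) := by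
    rw [aux_integral_mul_cexp_quadratic hbβ, hI0]
  have hint1 : Integrable fun x : ℝ ↦
      (x:ℂ) * Complex.exp (-(b:ℂ) * x ^ 2 + (Complex.I * s) * x + 0) :=
    aux_integrable_mul_cexp_quadratic hbβ _ _
  have hint0 : Integrable fun x : ℝ ↦
      Complex.exp (-(b:ℂ) * x ^ 2 + (Complex.I * s) * x + 0) :=
    integrable_cexp_quadratic' hbβ _ _
  rw [← MeasureTheory.integral_add_right_eq_self (fun x : ℝ ↦
    Complex.I * (x : ℂ) * Complex.exp (Complex.I * (s : ℂ) * ((x : ℂ) - (a : ℂ))) *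
        ((Real.sqrt (b / Real.pi) * Real.exp (-b * (x - a) ^ 2) : ℝ) : ℂ)) a]
  have hfun : ∀ x : ℝ,
      Complex.I * ((x + a : ℝ) : ℂ) *
          Complex.exp (Complex.I * (s : ℂ) * (((x + a : ℝ) : ℂ) - (a : ℂ))) *
          ((Real.sqrt (b / Real.pi) * Real.exp (-b * ((x + a : ℝ) - a) ^ 2) : ℝ) : ℂ) =
        (C * Complex.I) * ((x:ℂ) * Complex.exp (-(b:ℂ) * x ^ 2 + (Complex.I * s) * x + 0)) +
          (C * Complex.I * a) * Complex.exp (-(b:ℂ) * x ^ 2 + (Complex.I * s) * x + 0) := by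
    intro x
    rw [show ((x + a : ℝ) - a) = x by ring]
    push_cast
    rw [show (-(b:ℂ) * x ^ 2 + (Complex.I * s) * x + 0) =
        (Complex.I * s * x) + (-(b:ℂ) * x ^ 2) by ring, Complex.exp_add,
      show Complex.I * (s : ℂ) * (((x:ℂ) + a) - a) = Complex.I * s * x by ring, hC]
    ring
  simp only [hfun]
  rw [MeasureTheory.integral_add (hint1.const_mul _) (hint0.const_mul _),
    MeasureTheory.integral_const_mul, MeasureTheory.integral_const_mul, hI1, hI0]
  field_simp
  linear_combination (2*(a:ℂ)*(b:ℂ)*Complex.I*E - (s:ℂ)*E*(Complex.I^2 + 2)) * hCP + ((s:ℂ)*E*(2*C*P - 1)) * Complex.I_sq
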